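/- arXiv:math/0210224 — 5 statements merged into one kernel-verified Lean document; each statement's English description precedes it below -/
import Mathlib

section
/- For every n ≥ 1, the map σ ↦ v_σ = (σ(1), …, σ(n)) is injective on the symmetric group S_n, and the set of extreme points of the permutahedron P_n is exactly {v_σ : σ ∈ S_n}; hence P_n has exactly n! vertices. -/
/-- The vertex of the permutahedron `P_n` associated to a permutation `σ` of `{1,…,n}`:
the point `(σ(1), …, σ(n)) ∈ ℝ^n`. -/
def permVert (n : ℕ) (σ : Equiv.Perm (Fin n)) : Fin n → ℝ := fun i => ((σ i : ℕ) + 1 : ℝ)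

/-- The permutahedron `P_n ⊆ ℝ^n`: the convex hull of the `n!` points `v_σ`. -/
def permutahedron (n : ℕ) : Set (Fin n → ℝ) := convexHull ℝ (Set.range (permVert n))

lemma permVert_injective (n : ℕ) : Function.Injective (permVert n) := by
  intro σ τ h
  ext i
  have := congrFun h i
  simp only [permVert, add_left_inj, Nat.cast_inj] at this
  exact this

lemma permVert_sum_sq (n : ℕ) (σ : Equiv.Perm (Fin n)) :
    ∑ i, permVert n σ i ^ 2 = ∑ i : Fin n, (((i : ℕ) : ℝ) + 1) ^ 2 := by
  simpa [permVert] using Equiv.sum_comp σ (fun j => (((j : ℕ) : ℝ) + 1) ^ 2)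

lemma permVert_dot_lt (n : ℕ) {σ τ : Equiv.Perm (Fin n)} (h : τ ≠ σ) :
    ∑ i, permVert n σ i * permVert n τ i < ∑ i, permVert n σ i ^ 2 := by
  have hne : permVert n σ ≠ permVert n τ := fun he => h ((permVert_injective n he).symm)
  have hsq : ∑ i, permVert n τ i ^ 2 = ∑ i, permVert n σ i ^ 2 := by
    rw [permVert_sum_sq, permVert_sum_sq]
  have hpos : 0 < ∑ i, (permVert n σ i - permVert n τ i) ^ 2 := by
    obtain ⟨j, hj⟩ := Function.ne_iff.1 hne
    refine Finset.sum_pos' (fun i _ => sq_nonneg _) ⟨j, Finset.mem_univ j, ?_⟩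
    have hj' := sub_ne_zero.2 hj
    positivity
  have hexp : ∑ i, (permVert n σ i - permVert n τ i) ^ 2
      = ∑ i, permVert n σ i ^ 2 + ∑ i, permVert n τ i ^ 2
        - 2 * ∑ i, permVert n σ i * permVert n τ i := by
    rw [Finset.mul_sum, ← Finset.sum_add_distrib, ← Finset.sum_sub_distrib]
    exact Finset.sum_congr rfl fun i _ => by ring
  rw [hexp, hsq] at hpos
  linarith

/-- For every `n ≥ 1`: the map `σ ↦ v_σ` is injective on the symmetric group `S_n`; the
set of extreme points of `P_n` is exactly `{v_σ : σ ∈ S_n}`; hence `P_n` has exactly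
`n!` vertices (extreme points). -/
theorem permutahedron_extremePoints (n : ℕ) (hn : 1 ≤ n) :
    Function.Injective (permVert n) ∧
    Set.extremePoints ℝ (permutahedron n) = Set.range (permVert n) ∧
    (Set.extremePoints ℝ (permutahedron n)).ncard = Nat.factorial n := by
  have hinj := permVert_injective n
  have hext : Set.extremePoints ℝ (permutahedron n) = Set.range (permVert n) := by
    refine subset_antisymm extremePoints_convexHull_subset ?_
    rintro x ⟨σ, rfl⟩
    set f := permVert n σ with hf
    set c : ℝ := ∑ i, f i ^ 2 with hc
    set l : (Fin n → ℝ) → ℝ := fun y => ∑ i, f i * y i with hl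
    have hlin : IsLinearMap ℝ l := by
      constructor
      · intro a b
        simp only [hl, Pi.add_apply, mul_add, Finset.sum_add_distrib]
      · intro r a
        simp only [hl, Pi.smul_apply, smul_eq_mul, Finset.mul_sum]
        exact Finset.sum_congr rfl fun i _ => by ring
    have hlself : l f = c := by
      simp only [hl, hc, sq]
    have hmem : f ∈ permutahedron n := subset_convexHull ℝ _ ⟨σ, rfl⟩
    have hub : ∀ y ∈ permutahedron n, l y ≤ c := by
      intro y hy
      have : permutahedron n ⊆ {z | l z ≤ c} := by
        apply convexHull_min _ (convex_halfSpace_le hlin c)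
        rintro _ ⟨τ, rfl⟩
        by_cases hτ : τ = σ
        · subst hτ; exact le_of_eq hlself
        · exact le_of_lt (permVert_dot_lt n hτ)
      exact this hy
    have hface : ∀ y ∈ permutahedron n, l y = c → y = f := by
      intro y hy hyc
      by_cases hne : (Set.range (permVert n) \ {f}).Nonempty
      · have hrange : Set.range (permVert n)
            = insert f (Set.range (permVert n) \ {f}) := by
          have hfr : f ∈ Set.range (permVert n) := ⟨σ, rfl⟩
          rw [Set.insert_diff_singleton, Set.insert_eq_self.2 hfr]
        rw [permutahedron, hrange, convexHull_insert hne, mem_convexJoin] at hy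
        obtain ⟨w, hw, z, hz, hyz⟩ := hy
        rw [Set.mem_singleton_iff] at hw
        subst hw
        have hzlt : l z < c := by
          have : convexHull ℝ (Set.range (permVert n) \ {f}) ⊆ {w | l w < c} := by
            apply convexHull_min _ (convex_halfSpace_lt hlin c)
            rintro _ ⟨⟨τ, rfl⟩, hw⟩
            have hτ : τ ≠ σ := by rintro rfl; exact hw rfl
            exact permVert_dot_lt n hτ
          exact this hz
        obtain ⟨a, b, ha, hb, hab, rfl⟩ := hyz
        have hlcomb : a * l f + b * l z = c := by
          rw [← hyc, hlin.map_add, hlin.map_smul, hlin.map_smul]; rfl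
        rw [hlself] at hlcomb
        have hkey : a * c + b * c = c := by rw [← add_mul, hab, one_mul]
        have hb0 : b = 0 := by nlinarith [mul_le_mul_of_nonneg_left hzlt.le hb]
        have ha1 : a = 1 := by linarith
        rw [hb0, ha1, one_smul, zero_smul, add_zero]
      · rw [Set.not_nonempty_iff_eq_empty, Set.diff_eq_empty] at hne
        have : permutahedron n ⊆ {f} := by
          rw [permutahedron]
          calc convexHull ℝ (Set.range (permVert n)) ⊆ convexHull ℝ {f} :=
                convexHull_mono hne
            _ = {f} := convexHull_singleton f
        exact this hy
    rw [mem_extremePoints]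
    refine ⟨hmem, fun x1 h1 x2 h2 hseg => ?_⟩
    obtain ⟨a, b, ha, hb, hab, hcomb⟩ := hseg
    have h1c := hub x1 h1
    have h2c := hub x2 h2
    have hlcomb : a * l x1 + b * l x2 = c := by
      rw [← hlself, ← hcomb, hlin.map_add, hlin.map_smul, hlin.map_smul]; rfl
    have hx1 : l x1 = c := by
      by_contra h
      have hlt : l x1 < c := lt_of_le_of_ne h1c h
      have hkey : a * c + b * c = c := by rw [← add_mul, hab, one_mul]
      nlinarith [mul_lt_mul_of_pos_left hlt ha, mul_le_mul_of_nonneg_left h2c hb.le]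
    have hx2 : l x2 = c := by
      by_contra h
      have hlt : l x2 < c := lt_of_le_of_ne h2c h
      have hkey : a * c + b * c = c := by rw [← add_mul, hab, one_mul]
      nlinarith [mul_lt_mul_of_pos_left hlt hb, mul_le_mul_of_nonneg_left h1c ha.le]
    exact ⟨hface x1 h1 hx1, hface x2 h2 hx2⟩
  refine ⟨hinj, hext, ?_⟩
  rw [hext, ← Set.image_univ, Set.ncard_image_of_injective _ hinj, Set.ncard_univ,
    Nat.card_eq_fintype_card, Fintype.card_perm, Fintype.card_fin]
end

section
/- Let n ≥ 1 and let U_1|U_2|⋯|U_p be an ordered partition of {1, …, n} into nonempty blocks, and for 1 ≤ j < p set m_j = #(U_1 ∪ ⋯ ∪ U_j) and t_j = n + (n−1) + ⋯ + (n − m_j + 1). Then the set F(U_1|⋯|U_p) = {x ∈ P_n : Σ_{i ∈ U_1∪⋯∪U_j} x_i = t_j for all 1 ≤ j < p} is a nonempty exposed face of P_n; it equals the convex hull of the vertices v_σ for which σ maps U_1 onto the #U_1 largest values {n−m_1+1,…,n}, U_2 onto the next #U_2 values, and so on; and its affine dimension equals n − p. Thus the (n−p)-dimensional faces of P_n of this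 form are indexed by the ordered partitions of {1,…,n} into p blocks, distinct ordered partitions giving distinct faces. -/
/-- The sum of the `m` largest values among `{1,…,n}`: `(n−m+1) + (n−m+2) + ⋯ + n`. -/
def topSum (n m : ℕ) : ℕ := ∑ i ∈ Finset.Icc (n - m + 1) n, i

/-- The union `U_1 ∪ ⋯ ∪ U_j` of the first `j` blocks of an ordered partition
`U : Fin p → Finset (Fin n)`. -/
def cumulBlocks (n p : ℕ) (U : Fin p → Finset (Fin n)) (j : ℕ) : Finset (Fin n) :=
  (Finset.univ.filter (fun l : Fin p => (l : ℕ) < j)).biUnion U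

/-- The face `F(U_1|⋯|U_p) = {x ∈ P_n : Σ_{i ∈ U_1∪⋯∪U_j} x_i = t_j for all 1 ≤ j < p}`,
where `m_j = #(U_1∪⋯∪U_j)` and `t_j = n + (n−1) + ⋯ + (n−m_j+1)`. -/
def permFace (n p : ℕ) (U : Fin p → Finset (Fin n)) : Set (Fin n → ℝ) :=
  {x ∈ permutahedron n | ∀ j : ℕ, 1 ≤ j → j < p →
    ∑ i ∈ cumulBlocks n p U j, x i = (topSum n (cumulBlocks n p U j).card : ℝ)}

open Finset

/-- The set of the `m` largest indices in `Fin n` (those with `n - m ≤ i`). -/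
def topSet (n m : ℕ) : Finset (Fin n) := Finset.univ.filter (fun i => n - m ≤ (i : ℕ))

lemma topSet_image (n m : ℕ) : (topSet n m).image Fin.val = Finset.Ico (n - m) n := by
  ext x
  simp only [mem_image, topSet, mem_filter, mem_univ, true_and, mem_Ico]
  constructor
  · rintro ⟨i, hi, rfl⟩; exact ⟨hi, i.isLt⟩
  · rintro ⟨h1, h2⟩; exact ⟨⟨x, h2⟩, h1, rfl⟩

lemma topSet_card {n m : ℕ} (hm : m ≤ n) : (topSet n m).card = m := by
  have := topSet_image n m
  have h2 : ((topSet n m).image Fin.val).card = (topSet n m).card :=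
    Finset.card_image_of_injective _ Fin.val_injective
  rw [this, Nat.card_Ico] at h2
  omega

lemma topSum_eq {n m : ℕ} (hm : m ≤ n) : topSum n m = ∑ k ∈ Finset.range m, (n - m + k + 1) := by
  unfold topSum
  rw [← Finset.Ico_add_one_right_eq_Icc, Finset.sum_Ico_eq_sum_range]
  have h1 : n + 1 - (n - m + 1) = m := by omega
  apply Finset.sum_congr (by rw [h1])
  intro k hk
  omega

lemma topSet_sum {n m : ℕ} (hm : m ≤ n) :
    ∑ i ∈ topSet n m, ((i : ℕ) + 1) = topSum n m := by
  have h1 : ∑ i ∈ topSet n m, ((i : ℕ) + 1)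
      = ∑ x ∈ (topSet n m).image Fin.val, (x + 1) := by
    rw [Finset.sum_image (by intro a _ b _ h; exact Fin.val_injective h)]
  rw [h1, topSet_image, Finset.sum_Ico_eq_sum_range, topSum_eq hm]
  apply Finset.sum_congr (by congr 1; omega)
  intro k hk
  omega

lemma strictMono_fin_le {m n : ℕ} {f : Fin m → Fin n} (hf : StrictMono f) (k : Fin m) :
    (k : ℕ) ≤ (f k : ℕ) := by
  have H : ∀ K : ℕ, ∀ k : Fin m, (k : ℕ) = K → (k : ℕ) ≤ (f k : ℕ) := by
    intro K
    induction K with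
    | zero => intro k h; omega
    | succ K ih =>
      intro k h
      have hKm : K < m := by omega
      have hlt : (⟨K, hKm⟩ : Fin m) < k := by simp [Fin.lt_def]; omega
      have h1 : f ⟨K, hKm⟩ < f k := hf hlt
      have h2 := ih ⟨K, hKm⟩ rfl
      simp only [Fin.lt_def] at h1
      have h3 : ((⟨K, hKm⟩ : Fin m) : ℕ) = K := rfl
      rw [h3] at h2
      omega
  exact H _ k rfl

lemma strictMono_fin_ge {m n : ℕ} {f : Fin m → Fin n} (hf : StrictMono f) (k : Fin m) :
    (f k : ℕ) ≤ n - m + (k : ℕ) := by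
  have hg : StrictMono (fun j : Fin m => (f j.rev).rev) := by
    intro a b hab
    have h1 : b.rev < a.rev := by
      simp only [Fin.lt_def, Fin.val_rev]
      have := a.isLt; have := b.isLt
      simp only [Fin.lt_def] at hab
      omega
    have h2 := hf h1
    simp only [Fin.lt_def, Fin.val_rev] at h2 ⊢
    have := (f a.rev).isLt; have := (f b.rev).isLt
    omega
  have := strictMono_fin_le hg k.rev
  simp only [Fin.val_rev, Fin.rev_rev] at this
  have := (f k).isLt
  have := k.isLt
  omega

lemma sum_le_topSum {n : ℕ} (T : Finset (Fin n)) :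
    ∑ i ∈ T, ((i : ℕ) + 1) ≤ topSum n T.card ∧
    (∑ i ∈ T, ((i : ℕ) + 1) = topSum n T.card ↔ T = topSet n T.card) := by
  classical
  set m := T.card with hmdef
  have hm : m ≤ n := by
    have := Finset.card_le_univ T
    simpa using this
  set e : Fin m ↪o Fin n := T.orderEmbOfFin rfl with he
  have himg : Finset.image (fun k => e k) Finset.univ = T := by
    rw [← Finset.coe_inj, Finset.coe_image, Finset.coe_univ, Set.image_univ]
    exact T.range_orderEmbOfFin rfl
  have hsum : ∑ i ∈ T, ((i : ℕ) + 1) = ∑ k : Fin m, ((e k : ℕ) + 1) := by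
    rw [← himg, Finset.sum_image (by intro a _ b _ h; exact e.injective h)]
  have hbound : ∀ k : Fin m, (e k : ℕ) + 1 ≤ n - m + (k : ℕ) + 1 := by
    intro k
    have := strictMono_fin_ge e.strictMono k
    omega
  have htop : topSum n m = ∑ k : Fin m, (n - m + (k : ℕ) + 1) := by
    rw [topSum_eq hm, ← Fin.sum_univ_eq_sum_range]
  constructor
  · rw [hsum, htop]
    exact Finset.sum_le_sum (fun k _ => hbound k)
  constructor
  · intro heq
    have hall : ∀ k : Fin m, (e k : ℕ) = n - m + (k : ℕ) := by
      by_contra hcon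
      push_neg at hcon
      obtain ⟨k0, hk0⟩ := hcon
      have hlt : ∑ k : Fin m, ((e k : ℕ) + 1) < ∑ k : Fin m, (n - m + (k : ℕ) + 1) := by
        apply Finset.sum_lt_sum (fun k _ => hbound k)
        refine ⟨k0, Finset.mem_univ _, ?_⟩
        have := hbound k0
        omega
      rw [hsum, htop] at heq
      omega
    have hsub : T ⊆ topSet n m := by
      intro i hi
      rw [← himg] at hi
      simp only [Finset.mem_image, Finset.mem_univ, true_and] at hi
      obtain ⟨k, hk⟩ := hi
      simp only [topSet, Finset.mem_filter, Finset.mem_univ, true_and]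
      rw [← hk, hall k]
      omega
    exact Finset.eq_of_subset_of_card_le hsub (by rw [topSet_card hm, ← hmdef])
  · intro hT
    rw [hT]
    exact topSet_sum hm

section Blocks

variable {n p : ℕ} {U : Fin p → Finset (Fin n)}

lemma mem_cumulBlocks {i : Fin n} {j : ℕ} :
    i ∈ cumulBlocks n p U j ↔ ∃ l : Fin p, (l : ℕ) < j ∧ i ∈ U l := by
  simp [cumulBlocks]

lemma cumulBlocks_mono {j j' : ℕ} (h : j ≤ j') :
    cumulBlocks n p U j ⊆ cumulBlocks n p U j' := by
  intro i hi
  rw [mem_cumulBlocks] at *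
  obtain ⟨l, h1, h2⟩ := hi
  exact ⟨l, by omega, h2⟩

variable (hdisj : ∀ l l', l ≠ l' → Disjoint (U l) (U l'))
include hdisj

lemma sum_cumulBlocks {M : Type*} [AddCommMonoid M] (f : Fin n → M) (j : ℕ) :
    ∑ i ∈ cumulBlocks n p U j, f i
      = ∑ l ∈ Finset.univ.filter (fun l : Fin p => (l : ℕ) < j), ∑ i ∈ U l, f i := by
  apply Finset.sum_biUnion
  intro a _ b _ hab
  exact hdisj a b hab

lemma sum_cumul_succ {M : Type*} [AddCommMonoid M] (f : Fin n → M) {j : ℕ} (hj : j < p) :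
    ∑ i ∈ cumulBlocks n p U (j+1), f i
      = (∑ i ∈ cumulBlocks n p U j, f i) + ∑ i ∈ U ⟨j, hj⟩, f i := by
  have hins : Finset.univ.filter (fun l : Fin p => (l : ℕ) < j + 1)
      = insert ⟨j, hj⟩ (Finset.univ.filter (fun l : Fin p => (l : ℕ) < j)) := by
    ext l
    simp only [Finset.mem_filter, Finset.mem_univ, true_and, Finset.mem_insert, Fin.ext_iff]
    omega
  rw [sum_cumulBlocks hdisj, sum_cumulBlocks hdisj, hins, Finset.sum_insert (by simp), add_comm]

lemma cumul_lt_cumul (hne : ∀ l, (U l).Nonempty) {j j' : ℕ} (h : j < j') (hj' : j' ≤ p) :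
    (cumulBlocks n p U j).card < (cumulBlocks n p U j').card := by
  have hjp : j < p := by omega
  apply Finset.card_lt_card
  constructor
  · exact cumulBlocks_mono (by omega)
  · intro hsub
    obtain ⟨i0, hi0⟩ := hne ⟨j, hjp⟩
    have h1 : i0 ∈ cumulBlocks n p U j' := mem_cumulBlocks.2 ⟨⟨j, hjp⟩, by simpa using h, hi0⟩
    have h2 := hsub h1
    rw [mem_cumulBlocks] at h2
    obtain ⟨l, hl1, hl2⟩ := h2
    have hlne : l ≠ ⟨j, hjp⟩ := by
      intro he; rw [he] at hl1; simp at hl1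
    exact (Finset.disjoint_left.1 (hdisj l ⟨j, hjp⟩ hlne)) hl2 hi0

end Blocks

lemma topSet_univ (n : ℕ) : topSet n n = Finset.univ := by
  ext i; simp [topSet]

lemma topSum_univ_real (n : ℕ) :
    ((topSum n n : ℕ) : ℝ) = ∑ i : Fin n, ((i : ℕ) + 1 : ℝ) := by
  rw [← topSet_sum (le_refl n), topSet_univ]
  push_cast
  rfl

lemma vertex_mem (n : ℕ) (σ : Equiv.Perm (Fin n)) : permVert n σ ∈ permutahedron n :=
  subset_convexHull _ _ ⟨σ, rfl⟩

lemma vertex_sum_T (n : ℕ) (σ : Equiv.Perm (Fin n)) (T : Finset (Fin n)) :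
    ∑ i ∈ T, permVert n σ i = ((∑ i ∈ T.image σ, ((i : ℕ) + 1) : ℕ) : ℝ) := by
  rw [Finset.sum_image (by intro a _ b _ h; exact σ.injective h)]
  push_cast
  rfl

lemma isLinearMap_sum (n : ℕ) (T : Finset (Fin n)) :
    IsLinearMap ℝ (fun x : Fin n → ℝ => ∑ i ∈ T, x i) := by
  constructor
  · intro a b; simp [Finset.sum_add_distrib]
  · intro c a; simp [Finset.mul_sum]

lemma perm_sum_le (n : ℕ) (T : Finset (Fin n)) {x : Fin n → ℝ} (hx : x ∈ permutahedron n) :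
    ∑ i ∈ T, x i ≤ (topSum n T.card : ℝ) := by
  have hsub : permutahedron n ⊆ {x : Fin n → ℝ | ∑ i ∈ T, x i ≤ (topSum n T.card : ℝ)} := by
    apply convexHull_min _ (convex_halfSpace_le (isLinearMap_sum n T) _)
    rintro _ ⟨σ, rfl⟩
    simp only [Set.mem_setOf_eq]
    rw [vertex_sum_T]
    have h1 := (sum_le_topSum (T.image σ)).1
    rw [Finset.card_image_of_injective _ σ.injective] at h1
    exact_mod_cast h1
  exact hsub hx

lemma perm_sum_univ (n : ℕ) {x : Fin n → ℝ} (hx : x ∈ permutahedron n) :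
    ∑ i, x i = (topSum n n : ℝ) := by
  have hsub : permutahedron n ⊆ {x : Fin n → ℝ | ∑ i, x i = (topSum n n : ℝ)} := by
    apply convexHull_min _ (convex_hyperplane (isLinearMap_sum n Finset.univ) _)
    rintro _ ⟨σ, rfl⟩
    simp only [Set.mem_setOf_eq]
    rw [topSum_univ_real]
    exact Equiv.sum_comp σ (fun i => ((i : ℕ) + 1 : ℝ))
  exact hsub hx

lemma face_convexHull {E : Type*} [AddCommGroup E] [Module ℝ E] (s : Finset E)
    (l : E →ₗ[ℝ] ℝ) (c : ℝ) (hb : ∀ y ∈ s, l y ≤ c) :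
    {x ∈ convexHull ℝ (s : Set E) | l x = c}
      = convexHull ℝ ((s.filter (fun y => l y = c)) : Set E) := by
  classical
  apply Set.Subset.antisymm
  · rintro x ⟨hx, hlx⟩
    rw [Finset.convexHull_eq] at hx
    obtain ⟨w, hw0, hw1, hwx⟩ := hx
    rw [Finset.centerMass_eq_of_sum_1 _ _ hw1] at hwx
    simp only [id] at hwx
    have hlsum : ∑ y ∈ s, w y * l y = c := by
      have h2 := congrArg l hwx
      rw [map_sum] at h2
      simp only [map_smul, smul_eq_mul] at h2
      rw [h2, hlx]
    have hzero : ∀ y ∈ s, w y * (c - l y) = 0 := by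
      have hsum0 : ∑ y ∈ s, w y * (c - l y) = 0 := by
        have : ∑ y ∈ s, w y * (c - l y) = (∑ y ∈ s, w y) * c - ∑ y ∈ s, w y * l y := by
          rw [Finset.sum_mul, ← Finset.sum_sub_distrib]
          apply Finset.sum_congr rfl
          intro y _; ring
        rw [this, hw1, hlsum]; ring
      intro y hy
      have hnn : ∀ y ∈ s, 0 ≤ w y * (c - l y) := fun y hy =>
        mul_nonneg (hw0 y hy) (by have := hb y hy; linarith)
      exact (Finset.sum_eq_zero_iff_of_nonneg hnn).1 hsum0 y hy
    have hsubsum : ∑ y ∈ s.filter (fun y => l y = c), w y = 1 := by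
      rw [← hw1]
      apply Finset.sum_subset (Finset.filter_subset _ _)
      intro y hy hny
      simp only [Finset.mem_filter, hy, true_and] at hny
      have := hzero y hy
      rcases mul_eq_zero.1 this with h | h
      · exact h
      · exact absurd (by linarith : l y = c) hny
    have hxx : x = (s.filter (fun y => l y = c)).centerMass w id := by
      rw [Finset.centerMass_eq_of_sum_1 _ _ hsubsum]
      rw [← hwx]
      symm
      apply Finset.sum_subset (Finset.filter_subset _ _)
      intro y hy hny
      simp only [Finset.mem_filter, hy, true_and] at hny
      have := hzero y hy
      rcases mul_eq_zero.1 this with h | h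
      · simp [id, h]
      · exact absurd (by linarith : l y = c) hny
    rw [hxx]
    exact Finset.centerMass_mem_convexHull _
      (fun y hy => hw0 y (Finset.filter_subset _ _ hy))
      (by rw [hsubsum]; norm_num)
      (fun y hy => Finset.mem_coe.2 hy)
  · apply convexHull_min
    · intro y hy
      rw [Finset.mem_coe, Finset.mem_filter] at hy
      exact ⟨subset_convexHull _ _ (Finset.mem_coe.2 hy.1), hy.2⟩
    · exact (convex_convexHull ℝ _).inter (convex_hyperplane l.isLinear c)

/-- The exposing linear functional of the face. -/
noncomputable def faceFun (n p : ℕ) (U : Fin p → Finset (Fin n)) : (Fin n → ℝ) →ₗ[ℝ] ℝ :=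
  ∑ j ∈ Finset.Ico 1 p, ∑ i ∈ cumulBlocks n p U j, LinearMap.proj i

noncomputable def faceC (n p : ℕ) (U : Fin p → Finset (Fin n)) : ℝ :=
  ∑ j ∈ Finset.Ico 1 p, (topSum n (cumulBlocks n p U j).card : ℝ)

lemma faceFun_apply (n p : ℕ) (U : Fin p → Finset (Fin n)) (x : Fin n → ℝ) :
    faceFun n p U x = ∑ j ∈ Finset.Ico 1 p, ∑ i ∈ cumulBlocks n p U j, x i := by
  simp [faceFun]

lemma faceFun_le (n p : ℕ) (U : Fin p → Finset (Fin n)) {x : Fin n → ℝ}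
    (hx : x ∈ permutahedron n) : faceFun n p U x ≤ faceC n p U := by
  rw [faceFun_apply, faceC]
  exact Finset.sum_le_sum (fun j _ => perm_sum_le n _ hx)

lemma faceFun_eq_iff (n p : ℕ) (U : Fin p → Finset (Fin n)) {x : Fin n → ℝ}
    (hx : x ∈ permutahedron n) :
    faceFun n p U x = faceC n p U ↔ ∀ j ∈ Finset.Ico 1 p,
      ∑ i ∈ cumulBlocks n p U j, x i = (topSum n (cumulBlocks n p U j).card : ℝ) := by
  rw [faceFun_apply, faceC]
  exact Finset.sum_eq_sum_iff_of_le (fun j _ => perm_sum_le n _ hx)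

lemma permFace_eq_level (n p : ℕ) (U : Fin p → Finset (Fin n)) :
    permFace n p U = {x ∈ permutahedron n | faceFun n p U x = faceC n p U} := by
  ext x
  simp only [permFace, Set.mem_setOf_eq]
  constructor
  · rintro ⟨hx, h⟩
    exact ⟨hx, (faceFun_eq_iff n p U hx).2 (fun j hj => by
      rw [Finset.mem_Ico] at hj; exact h j hj.1 hj.2)⟩
  · rintro ⟨hx, h⟩
    exact ⟨hx, fun j h1 h2 => (faceFun_eq_iff n p U hx).1 h j (Finset.mem_Ico.2 ⟨h1, h2⟩)⟩

lemma image_succ_topSet (n m : ℕ) :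
    (topSet n m).image (fun i : Fin n => (i : ℕ) + 1) = Finset.Icc (n - m + 1) n := by
  have h1 : (fun i : Fin n => (i : ℕ) + 1) = (fun x : ℕ => x + 1) ∘ Fin.val := rfl
  rw [h1, ← Finset.image_image, topSet_image, Finset.image_add_right_Ico, ← Finset.Ico_add_one_right_eq_Icc]

lemma image_succ_eq_iff {n m : ℕ} (S : Finset (Fin n)) :
    S.image (fun i : Fin n => (i : ℕ) + 1) = Finset.Icc (n - m + 1) n ↔ S = topSet n m := by
  constructor
  · intro h
    have hinj : Function.Injective (fun i : Fin n => (i : ℕ) + 1) := by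
      intro a b hab
      simp only at hab
      exact Fin.val_injective (by omega)
    apply Finset.image_injective hinj
    rw [h, image_succ_topSet]
  · intro h; rw [h, image_succ_topSet]

lemma vertex_sum_eq_iff (n : ℕ) (σ : Equiv.Perm (Fin n)) (T : Finset (Fin n)) :
    ∑ i ∈ T, permVert n σ i = (topSum n T.card : ℝ) ↔ T.image σ = topSet n T.card := by
  rw [vertex_sum_T, Nat.cast_inj]
  have hcard : (T.image σ).card = T.card := Finset.card_image_of_injective _ σ.injective
  rw [← hcard]
  exact (sum_le_topSum (T.image σ)).2

lemma vertex_cond_iff (n p : ℕ) (U : Fin p → Finset (Fin n)) (σ : Equiv.Perm (Fin n)) :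
    faceFun n p U (permVert n σ) = faceC n p U ↔
      (∀ j : ℕ, 1 ≤ j → j < p →
        (cumulBlocks n p U j).image (fun i => (σ i : ℕ) + 1) =
          Finset.Icc (n - (cumulBlocks n p U j).card + 1) n) := by
  rw [faceFun_eq_iff n p U (vertex_mem n σ)]
  constructor
  · intro h j h1 h2
    have := (vertex_sum_eq_iff n σ _).1 (h j (Finset.mem_Ico.2 ⟨h1, h2⟩))
    rw [show (fun i : Fin n => (σ i : ℕ) + 1) = (fun i : Fin n => (i : ℕ) + 1) ∘ σ from rfl,
      ← Finset.image_image, this, image_succ_topSet]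
  · intro h j hj
    rw [Finset.mem_Ico] at hj
    rw [vertex_sum_eq_iff]
    have h2 := h j hj.1 hj.2
    rw [show (fun i : Fin n => (σ i : ℕ) + 1) = (fun i : Fin n => (i : ℕ) + 1) ∘ σ from rfl,
      ← Finset.image_image] at h2
    exact (image_succ_eq_iff _).1 h2

section Construct

variable {n p : ℕ} {U : Fin p → Finset (Fin n)}

lemma exists_blk (hcover : cumulBlocks n p U p = Finset.univ) (i : Fin n) : ∃ l, i ∈ U l := by
  have h : i ∈ cumulBlocks n p U p := by rw [hcover]; exact Finset.mem_univ i
  rw [mem_cumulBlocks] at h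
  obtain ⟨l, _, h⟩ := h
  exact ⟨l, h⟩

lemma blk_unique (hdisj : ∀ l l', l ≠ l' → Disjoint (U l) (U l')) {i : Fin n} {l l' : Fin p}
    (h : i ∈ U l) (h' : i ∈ U l') : l = l' := by
  by_contra hne
  exact Finset.disjoint_left.1 (hdisj l l' hne) h h'

lemma mem_cumul_iff_blk (hdisj : ∀ l l', l ≠ l' → Disjoint (U l) (U l')) {i : Fin n} {l : Fin p}
    (hil : i ∈ U l) {j : ℕ} : i ∈ cumulBlocks n p U j ↔ (l : ℕ) < j := by
  rw [mem_cumulBlocks]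
  constructor
  · rintro ⟨l', hl', hil'⟩; rw [blk_unique hdisj hil hil']; exact hl'
  · intro h; exact ⟨l, h, hil⟩

lemma card_cumul_le (n p : ℕ) (U : Fin p → Finset (Fin n)) (j : ℕ) :
    (cumulBlocks n p U j).card ≤ n := by
  simpa using Finset.card_le_univ (cumulBlocks n p U j)

lemma exists_perm_blocks (hn : 1 ≤ n)
    (hdisj : ∀ l l', l ≠ l' → Disjoint (U l) (U l'))
    (hcover : cumulBlocks n p U p = Finset.univ) :
    ∃ σ : Equiv.Perm (Fin n), ∀ j : ℕ, j ≤ p →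
      (cumulBlocks n p U j).image σ = topSet n (cumulBlocks n p U j).card := by
  classical
  choose blk hblk using exists_blk hcover
  set key : Fin n → ℕ := fun i => (blk i : ℕ) * n + (i : ℕ) with hkey
  have keylt : ∀ a b : Fin n, (blk a : ℕ) < (blk b : ℕ) → key a < key b := by
    intro a b h
    have ha := a.isLt
    have h1 : key a < ((blk a : ℕ) + 1) * n := by
      simp only [hkey, add_one_mul]; omega
    have h2 : ((blk a : ℕ) + 1) * n ≤ (blk b : ℕ) * n := Nat.mul_le_mul_right n (by omega)
    have h3 : (blk b : ℕ) * n ≤ key b := by simp [hkey]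
    omega
  have hkeyinj : Function.Injective key := by
    intro a b hab
    rcases lt_trichotomy (blk a : ℕ) (blk b : ℕ) with h | h | h
    · exact absurd hab (by have := keylt a b h; omega)
    · have h2 : (blk a : ℕ) * n = (blk b : ℕ) * n := by rw [h]
      simp only [hkey] at hab
      exact Fin.val_injective (by omega)
    · exact absurd hab (by have := keylt b a h; omega)
  set ord : Fin n → ℕ := fun i => (Finset.univ.filter (fun k => key k < key i)).card with hord
  have hordlt : ∀ i, ord i < n := by
    intro i
    have hsub : Finset.univ.filter (fun k => key k < key i) ⊆ Finset.univ.erase i := by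
      intro k hk
      simp only [Finset.mem_filter, Finset.mem_univ, true_and] at hk
      exact Finset.mem_erase.2 ⟨fun he => by rw [he] at hk; omega, Finset.mem_univ k⟩
    have h1 := Finset.card_le_card hsub
    rw [Finset.card_erase_of_mem (Finset.mem_univ i), Finset.card_univ, Fintype.card_fin] at h1
    simp only [hord]
    omega
  have hordmono : ∀ a b : Fin n, key a < key b → ord a < ord b := by
    intro a b h
    apply Finset.card_lt_card
    constructor
    · intro k hk
      simp only [Finset.mem_filter, Finset.mem_univ, true_and] at *
      omega
    · intro hsub
      have ha : a ∈ Finset.univ.filter (fun k => key k < key b) := by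
        simp only [Finset.mem_filter, Finset.mem_univ, true_and]; exact h
      have := hsub ha
      simp at this
  set f : Fin n → Fin n := fun i => ⟨n - 1 - ord i, by have := hordlt i; omega⟩ with hf
  have hfinj : Function.Injective f := by
    intro a b hab
    have h1 : ord a = ord b := by
      have := hordlt a; have := hordlt b
      simp only [hf, Fin.mk.injEq] at hab
      omega
    by_contra hne
    have hkne : key a ≠ key b := fun h => hne (hkeyinj h)
    rcases lt_or_gt_of_ne hkne with h | h
    · exact absurd h1 (by have := hordmono a b h; omega)
    · exact absurd h1 (by have := hordmono b a h; omega)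
  set σ : Equiv.Perm (Fin n) := Equiv.ofBijective f (Finite.injective_iff_bijective.mp hfinj)
    with hσ
  have hσval : ∀ i, (σ i : ℕ) = n - 1 - ord i := fun i => rfl
  have hmem : ∀ (j : ℕ) (i : Fin n),
      i ∈ cumulBlocks n p U j ↔ ord i < (cumulBlocks n p U j).card := by
    intro j i
    constructor
    · intro hi
      have hsub : Finset.univ.filter (fun k => key k < key i)
          ⊆ (cumulBlocks n p U j).erase i := by
        intro k hk
        simp only [Finset.mem_filter, Finset.mem_univ, true_and] at hk
        rw [Finset.mem_erase]
        refine ⟨fun he => by rw [he] at hk; omega, ?_⟩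
        rw [mem_cumul_iff_blk hdisj (hblk k)]
        have hbi := (mem_cumul_iff_blk hdisj (hblk i)).1 hi
        by_contra hc
        push_neg at hc
        have := keylt i k (by omega)
        omega
      have h1 := Finset.card_le_card hsub
      rw [Finset.card_erase_of_mem hi] at h1
      have hpos : 0 < (cumulBlocks n p U j).card := Finset.card_pos.2 ⟨i, hi⟩
      simp only [hord]
      omega
    · intro hordi
      by_contra hc
      have hbi : ¬ (blk i : ℕ) < j := fun h => hc ((mem_cumul_iff_blk hdisj (hblk i)).2 h)
      have hsub : cumulBlocks n p U j ⊆ Finset.univ.filter (fun k => key k < key i) := by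
        intro k hk
        simp only [Finset.mem_filter, Finset.mem_univ, true_and]
        have hbk := (mem_cumul_iff_blk hdisj (hblk k)).1 hk
        exact keylt k i (by omega)
      have := Finset.card_le_card hsub
      simp only [hord] at hordi
      omega
  refine ⟨σ, fun j hj => ?_⟩
  ext a
  simp only [Finset.mem_image, topSet, Finset.mem_filter, Finset.mem_univ, true_and]
  have hmj := card_cumul_le n p U j
  constructor
  · rintro ⟨i, hi, rfl⟩
    have h1 := (hmem j i).1 hi
    have h2 := hordlt i
    rw [hσval i]
    omega
  · intro ha
    refine ⟨σ.symm a, ?_, σ.apply_symm_apply a⟩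
    rw [hmem j]
    have h2 := hordlt (σ.symm a)
    have h3 : (σ (σ.symm a) : ℕ) = n - 1 - ord (σ.symm a) := hσval _
    rw [σ.apply_symm_apply] at h3
    omega

end Construct

section Main

variable {n p : ℕ} {U : Fin p → Finset (Fin n)}

/-- The strong condition: `σ` maps each cumulative block onto the corresponding top set. -/
def strongCond (n p : ℕ) (U : Fin p → Finset (Fin n)) (σ : Equiv.Perm (Fin n)) : Prop :=
  ∀ j : ℕ, j ≤ p → (cumulBlocks n p U j).image σ = topSet n (cumulBlocks n p U j).card

lemma strongCond_level {σ : Equiv.Perm (Fin n)} (hσ : strongCond n p U σ) :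
    faceFun n p U (permVert n σ) = faceC n p U := by
  rw [faceFun_eq_iff n p U (vertex_mem n σ)]
  intro j hj
  rw [Finset.mem_Ico] at hj
  exact (vertex_sum_eq_iff n σ _).2 (hσ j (by omega))

lemma strongCond_mem_face {σ : Equiv.Perm (Fin n)} (hσ : strongCond n p U σ) :
    permVert n σ ∈ permFace n p U := by
  rw [permFace_eq_level]
  exact ⟨vertex_mem n σ, strongCond_level hσ⟩

lemma image_swap_cumul (hdisj : ∀ l l', l ≠ l' → Disjoint (U l) (U l'))
    {l : Fin p} {i1 i2 : Fin n} (h1 : i1 ∈ U l) (h2 : i2 ∈ U l) (j : ℕ) :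
    (cumulBlocks n p U j).image (Equiv.swap i1 i2) = cumulBlocks n p U j := by
  apply Finset.eq_of_subset_of_card_le
  · rintro a ha
    rw [Finset.mem_image] at ha
    obtain ⟨b, hb, rfl⟩ := ha
    by_cases hbl : (l : ℕ) < j
    · by_cases hb1 : b = i1
      · rw [hb1, Equiv.swap_apply_left]
        exact (mem_cumul_iff_blk hdisj h2).2 hbl
      by_cases hb2 : b = i2
      · rw [hb2, Equiv.swap_apply_right]
        exact (mem_cumul_iff_blk hdisj h1).2 hbl
      rw [Equiv.swap_apply_of_ne_of_ne hb1 hb2]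
      exact hb
    · have hb1 : b ≠ i1 := by
        rintro rfl
        exact hbl ((mem_cumul_iff_blk hdisj h1).1 hb)
      have hb2 : b ≠ i2 := by
        rintro rfl
        exact hbl ((mem_cumul_iff_blk hdisj h2).1 hb)
      rw [Equiv.swap_apply_of_ne_of_ne hb1 hb2]
      exact hb
  · rw [Finset.card_image_of_injective _ (Equiv.swap i1 i2).injective]

lemma strongCond_swap (hdisj : ∀ l l', l ≠ l' → Disjoint (U l) (U l'))
    {σ : Equiv.Perm (Fin n)} (hσ : strongCond n p U σ)
    {l : Fin p} {i1 i2 : Fin n} (h1 : i1 ∈ U l) (h2 : i2 ∈ U l) :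
    strongCond n p U ((Equiv.swap i1 i2).trans σ) := by
  intro j hj
  have : (cumulBlocks n p U j).image ((Equiv.swap i1 i2).trans σ)
      = ((cumulBlocks n p U j).image (Equiv.swap i1 i2)).image σ := by
    rw [Finset.image_image]
    rfl
  rw [this, image_swap_cumul hdisj h1 h2, hσ j hj]

lemma permFace_nonempty (hn : 1 ≤ n)
    (hdisj : ∀ l l', l ≠ l' → Disjoint (U l) (U l'))
    (hcover : cumulBlocks n p U p = Finset.univ) :
    (permFace n p U).Nonempty := by
  obtain ⟨σ, hσ⟩ := exists_perm_blocks hn hdisj hcover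
  exact ⟨permVert n σ, strongCond_mem_face hσ⟩

lemma permFace_isExposed (hn : 1 ≤ n)
    (hdisj : ∀ l l', l ≠ l' → Disjoint (U l) (U l'))
    (hcover : cumulBlocks n p U p = Finset.univ) :
    IsExposed ℝ (permutahedron n) (permFace n p U) := by
  intro _
  refine ⟨LinearMap.toContinuousLinearMap (faceFun n p U), ?_⟩
  obtain ⟨σ0, hσ0⟩ := exists_perm_blocks hn hdisj hcover
  rw [permFace_eq_level]
  ext x
  simp only [Set.mem_setOf_eq, LinearMap.coe_toContinuousLinearMap']
  constructor
  · rintro ⟨hx, hlx⟩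
    exact ⟨hx, fun y hy => by rw [hlx]; exact faceFun_le n p U hy⟩
  · rintro ⟨hx, hmax⟩
    refine ⟨hx, le_antisymm (faceFun_le n p U hx) ?_⟩
    have := hmax (permVert n σ0) (vertex_mem n σ0)
    rw [strongCond_level hσ0] at this
    exact this

lemma permFace_eq_hull (hn : 1 ≤ n)
    (hdisj : ∀ l l', l ≠ l' → Disjoint (U l) (U l'))
    (hcover : cumulBlocks n p U p = Finset.univ) :
    permFace n p U = convexHull ℝ {y | ∃ σ : Equiv.Perm (Fin n),
      (∀ j : ℕ, 1 ≤ j → j < p →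
        (cumulBlocks n p U j).image (fun i => (σ i : ℕ) + 1) =
          Finset.Icc (n - (cumulBlocks n p U j).card + 1) n) ∧ y = permVert n σ} := by
  classical
  have hrange : Set.range (permVert n)
      = ((Finset.univ.image (permVert n) : Finset (Fin n → ℝ)) : Set (Fin n → ℝ)) := by
    rw [Finset.coe_image, Finset.coe_univ, Set.image_univ]
  have hface : permFace n p U = {x ∈ convexHull ℝ
      ((Finset.univ.image (permVert n) : Finset (Fin n → ℝ)) : Set (Fin n → ℝ)) |
        faceFun n p U x = faceC n p U} := by
    rw [permFace_eq_level]
    unfold permutahedron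
    rw [hrange]
  rw [hface, face_convexHull _ _ _ (fun y hy => by
    apply faceFun_le n p U
    unfold permutahedron
    rw [hrange]
    exact subset_convexHull _ _ (Finset.mem_coe.2 hy))]
  congr 1
  ext y
  simp only [Finset.coe_filter, Finset.mem_image, Finset.mem_univ, true_and,
    Set.mem_setOf_eq]
  constructor
  · rintro ⟨⟨σ, rfl⟩, hc⟩
    exact ⟨σ, (vertex_cond_iff n p U σ).1 hc, rfl⟩
  · rintro ⟨σ, hc, rfl⟩
    exact ⟨⟨σ, rfl⟩, (vertex_cond_iff n p U σ).2 hc⟩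

end Main

section Dim

variable {n p : ℕ} {U : Fin p → Finset (Fin n)}

noncomputable def blockMap (n p : ℕ) (U : Fin p → Finset (Fin n)) :
    (Fin n → ℝ) →ₗ[ℝ] (Fin p → ℝ) :=
  LinearMap.pi (fun l => ∑ i ∈ U l, LinearMap.proj i)

lemma blockMap_apply (v : Fin n → ℝ) (l : Fin p) : blockMap n p U v l = ∑ i ∈ U l, v i := by
  simp [blockMap]

lemma blockMap_surjective (hne : ∀ l, (U l).Nonempty)
    (hdisj : ∀ l l', l ≠ l' → Disjoint (U l) (U l'))
    (hcover : cumulBlocks n p U p = Finset.univ) :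
    Function.Surjective (blockMap n p U) := by
  classical
  intro w
  choose blk hblk using exists_blk hcover
  refine ⟨fun i => w (blk i) / ((U (blk i)).card : ℝ), ?_⟩
  funext l
  rw [blockMap_apply]
  have hcongr : ∀ i ∈ U l, w (blk i) / ((U (blk i)).card : ℝ) = w l / ((U l).card : ℝ) := by
    intro i hi; rw [blk_unique hdisj (hblk i) hi]
  rw [Finset.sum_congr rfl hcongr, Finset.sum_const, nsmul_eq_mul]
  have hcard : ((U l).card : ℝ) ≠ 0 := by
    have := Finset.card_pos.2 (hne l)
    exact Nat.cast_ne_zero.2 (by omega)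
  field_simp

lemma face_cumul_sum (hcover : cumulBlocks n p U p = Finset.univ)
    {x : Fin n → ℝ} (hx : x ∈ permFace n p U) {j : ℕ} (hj : j ≤ p) :
    ∑ i ∈ cumulBlocks n p U j, x i = (topSum n (cumulBlocks n p U j).card : ℝ) := by
  rcases Nat.eq_zero_or_pos j with rfl | hj0
  · have hC0 : cumulBlocks n p U 0 = ∅ := by
      ext i; rw [mem_cumulBlocks]; simp
    rw [hC0]
    simp only [Finset.sum_empty, Finset.card_empty]
    have : topSum n 0 = 0 := by
      unfold topSum
      rw [Finset.Icc_eq_empty (by omega)]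
      simp
    rw [this]
    simp
  rcases Nat.lt_or_ge j p with hjp | hjp
  · exact hx.2 j hj0 hjp
  · have hj' : j = p := le_antisymm hj hjp
    subst hj'
    rw [hcover]
    have hcard : (Finset.univ : Finset (Fin n)).card = n := by simp
    rw [hcard]
    exact perm_sum_univ n hx.1

lemma face_block_sum (hdisj : ∀ l l', l ≠ l' → Disjoint (U l) (U l'))
    (hcover : cumulBlocks n p U p = Finset.univ)
    {x y : Fin n → ℝ} (hx : x ∈ permFace n p U) (hy : y ∈ permFace n p U) (l : Fin p) :
    ∑ i ∈ U l, x i = ∑ i ∈ U l, y i := by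
  have hl := l.isLt
  have hx1 := face_cumul_sum hcover hx (le_of_lt hl)
  have hx2 := face_cumul_sum hcover hx (Nat.succ_le_of_lt hl)
  have hy1 := face_cumul_sum hcover hy (le_of_lt hl)
  have hy2 := face_cumul_sum hcover hy (Nat.succ_le_of_lt hl)
  have hsx := sum_cumul_succ hdisj x hl
  have hsy := sum_cumul_succ hdisj y hl
  rw [Fin.eta] at hsx hsy
  rw [hx1, hx2] at hsx
  rw [hy1, hy2] at hsy
  linarith

lemma single_sub_mem_direction (hn : 1 ≤ n)
    (hdisj : ∀ l l', l ≠ l' → Disjoint (U l) (U l'))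
    (hcover : cumulBlocks n p U p = Finset.univ)
    {l : Fin p} {i1 i2 : Fin n} (h1 : i1 ∈ U l) (h2 : i2 ∈ U l) :
    (Pi.single i1 1 - Pi.single i2 1 : Fin n → ℝ)
      ∈ (affineSpan ℝ (permFace n p U)).direction := by
  by_cases he : i1 = i2
  · subst he
    simp only [sub_self]
    exact Submodule.zero_mem _
  obtain ⟨σ, hσ⟩ := exists_perm_blocks hn hdisj hcover
  set σ' := (Equiv.swap i1 i2).trans σ with hσ'def
  have hmem1 : permVert n σ ∈ permFace n p U := strongCond_mem_face hσ
  have hmem2 : permVert n σ' ∈ permFace n p U :=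
    strongCond_mem_face (strongCond_swap hdisj hσ h1 h2)
  have hd : permVert n σ - permVert n σ' ∈ (affineSpan ℝ (permFace n p U)).direction := by
    have := AffineSubspace.vsub_mem_direction
      (subset_affineSpan ℝ _ hmem1) (subset_affineSpan ℝ _ hmem2)
    simpa [vsub_eq_sub] using this
  set c : ℝ := ((σ i1 : ℕ) : ℝ) - ((σ i2 : ℕ) : ℝ) with hcdef
  have hc : c ≠ 0 := by
    have hne12 : (σ i1 : ℕ) ≠ (σ i2 : ℕ) :=
      fun h => he (σ.injective (Fin.val_injective h))
    simp only [hcdef]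
    intro h
    exact hne12 (by exact_mod_cast sub_eq_zero.1 h)
  have hkey : permVert n σ - permVert n σ' = c • (Pi.single i1 1 - Pi.single i2 1) := by
    funext k
    simp only [Pi.sub_apply, Pi.smul_apply, smul_eq_mul]
    by_cases hk1 : k = i1
    · subst hk1
      have hs : σ' k = σ i2 := by
        simp [hσ'def, Equiv.swap_apply_left]
      have e1 : (Pi.single k (1:ℝ) : Fin n → ℝ) k = 1 := Pi.single_eq_same k 1
      have e2 : (Pi.single i2 (1:ℝ) : Fin n → ℝ) k = 0 := Pi.single_eq_of_ne he 1
      simp only [permVert, hs, e1, e2, hcdef]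
      ring
    · by_cases hk2 : k = i2
      · subst hk2
        have hs : σ' k = σ i1 := by
          simp [hσ'def, Equiv.swap_apply_right]
        have e1 : (Pi.single i1 (1:ℝ) : Fin n → ℝ) k = 0 := Pi.single_eq_of_ne (fun h => hk1 h) 1
        have e2 : (Pi.single k (1:ℝ) : Fin n → ℝ) k = 1 := Pi.single_eq_same k 1
        simp only [permVert, hs, e1, e2, hcdef]
        ring
      · have hs : σ' k = σ k := by
          simp [hσ'def, Equiv.swap_apply_of_ne_of_ne hk1 hk2]
        have e1 : (Pi.single i1 (1:ℝ) : Fin n → ℝ) k = 0 := Pi.single_eq_of_ne (fun h => hk1 h) 1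
        have e2 : (Pi.single i2 (1:ℝ) : Fin n → ℝ) k = 0 := Pi.single_eq_of_ne (fun h => hk2 h) 1
        simp only [permVert, hs, e1, e2, hcdef]
        ring
  have hfin : (Pi.single i1 1 - Pi.single i2 1 : Fin n → ℝ)
      = c⁻¹ • (permVert n σ - permVert n σ') := by
    rw [hkey, smul_smul, inv_mul_cancel₀ hc, one_smul]
  rw [hfin]
  exact Submodule.smul_mem _ _ hd

end Dim

section Dim2

variable {n p : ℕ} {U : Fin p → Finset (Fin n)}

lemma le_card_cumul (hne : ∀ l, (U l).Nonempty)
    (hdisj : ∀ l l', l ≠ l' → Disjoint (U l) (U l')) :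
    ∀ j, j ≤ p → j ≤ (cumulBlocks n p U j).card := by
  intro j
  induction j with
  | zero => intro _; omega
  | succ j ih =>
    intro hj
    have h1 := ih (by omega)
    have h2 := cumul_lt_cumul hdisj hne (show j < j + 1 by omega) hj
    omega

lemma p_le_n (hne : ∀ l, (U l).Nonempty)
    (hdisj : ∀ l l', l ≠ l' → Disjoint (U l) (U l'))
    (hcover : cumulBlocks n p U p = Finset.univ) : p ≤ n := by
  have := le_card_cumul hne hdisj p (le_refl p)
  rw [hcover] at this
  simpa using this

lemma direction_le_ker (hn : 1 ≤ n)
    (hdisj : ∀ l l', l ≠ l' → Disjoint (U l) (U l'))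
    (hcover : cumulBlocks n p U p = Finset.univ)
    {x0 : Fin n → ℝ} (hx0 : x0 ∈ permFace n p U) :
    (affineSpan ℝ (permFace n p U)).direction ≤ LinearMap.ker (blockMap n p U) := by
  have hsub : permFace n p U ⊆
      (AffineSubspace.mk' x0 (LinearMap.ker (blockMap n p U)) : Set (Fin n → ℝ)) := by
    intro x hx
    rw [AffineSubspace.mem_coe, AffineSubspace.mem_mk', LinearMap.mem_ker]
    funext l
    rw [blockMap_apply]
    simp only [vsub_eq_sub, Pi.sub_apply, Pi.zero_apply]
    rw [Finset.sum_sub_distrib, face_block_sum hdisj hcover hx hx0 l, sub_self]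
  calc (affineSpan ℝ (permFace n p U)).direction
      ≤ (AffineSubspace.mk' x0 (LinearMap.ker (blockMap n p U))).direction :=
        AffineSubspace.direction_le (affineSpan_le.2 hsub)
    _ = LinearMap.ker (blockMap n p U) := AffineSubspace.direction_mk' _ _

lemma ker_le_direction (hn : 1 ≤ n) (hne : ∀ l, (U l).Nonempty)
    (hdisj : ∀ l l', l ≠ l' → Disjoint (U l) (U l'))
    (hcover : cumulBlocks n p U p = Finset.univ) :
    LinearMap.ker (blockMap n p U) ≤ (affineSpan ℝ (permFace n p U)).direction := by
  classical
  intro v hv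
  have hblock0 : ∀ l, ∑ i ∈ U l, v i = 0 := by
    intro l
    have := congrFun (LinearMap.mem_ker.1 hv) l
    rw [blockMap_apply] at this
    simpa using this
  have hsplit : ∀ (f : Fin n → (Fin n → ℝ)),
      ∑ i : Fin n, f i = ∑ l : Fin p, ∑ i ∈ U l, f i := by
    intro f
    conv_lhs => rw [show (Finset.univ : Finset (Fin n)) = cumulBlocks n p U p from hcover.symm]
    rw [sum_cumulBlocks hdisj]
    congr 1
    apply Finset.filter_true_of_mem
    intro l _
    exact l.isLt
  have hrep : v = ∑ l : Fin p, ∑ i ∈ U l,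
      v i • (Pi.single i (1:ℝ) - Pi.single ((hne l).choose) 1) := by
    have hinner : ∀ l : Fin p, ∑ i ∈ U l,
        v i • (Pi.single i (1:ℝ) - Pi.single ((hne l).choose) 1)
          = ∑ i ∈ U l, v i • (Pi.single i (1:ℝ) : Fin n → ℝ) := by
      intro l
      have : ∑ i ∈ U l, v i • (Pi.single i (1:ℝ) - Pi.single ((hne l).choose) 1)
          = (∑ i ∈ U l, v i • (Pi.single i (1:ℝ) : Fin n → ℝ))
            - ∑ i ∈ U l, v i • (Pi.single ((hne l).choose) (1:ℝ) : Fin n → ℝ) := by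
        rw [← Finset.sum_sub_distrib]
        apply Finset.sum_congr rfl
        intro i _
        rw [smul_sub]
      rw [this, ← Finset.sum_smul, hblock0 l, zero_smul, sub_zero]
    rw [Finset.sum_congr rfl (fun l _ => hinner l), ← hsplit (fun i => v i • (Pi.single i (1:ℝ) : Fin n → ℝ))]
    have : ∀ i : Fin n, v i • (Pi.single i (1:ℝ) : Fin n → ℝ) = Pi.single i (v i) := by
      intro i
      funext k
      by_cases hk : k = i
      · subst hk; simp
      · simp [Pi.single_eq_of_ne hk]
    rw [Finset.sum_congr rfl (fun i _ => this i)]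
    exact (Finset.univ_sum_single v).symm
  rw [hrep]
  apply Submodule.sum_mem
  intro l _
  apply Submodule.sum_mem
  intro i hi
  exact Submodule.smul_mem _ _
    (single_sub_mem_direction hn hdisj hcover hi (hne l).choose_spec)

lemma finrank_direction (hn : 1 ≤ n) (hp : 1 ≤ p) (hne : ∀ l, (U l).Nonempty)
    (hdisj : ∀ l l', l ≠ l' → Disjoint (U l) (U l'))
    (hcover : cumulBlocks n p U p = Finset.univ) :
    Module.finrank ℝ (affineSpan ℝ (permFace n p U)).direction = n - p := by
  obtain ⟨x0, hx0⟩ := permFace_nonempty hn hdisj hcover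
  have hdir : (affineSpan ℝ (permFace n p U)).direction = LinearMap.ker (blockMap n p U) :=
    le_antisymm (direction_le_ker hn hdisj hcover hx0) (ker_le_direction hn hne hdisj hcover)
  rw [hdir]
  have hsur := blockMap_surjective hne hdisj hcover
  have h1 := LinearMap.finrank_range_add_finrank_ker (blockMap n p U)
  rw [LinearMap.range_eq_top.2 hsur, finrank_top] at h1
  rw [Module.finrank_fin_fun, Module.finrank_fin_fun] at h1
  have := p_le_n hne hdisj hcover
  omega

end Dim2

section Distinct

variable {n p : ℕ} {U U' : Fin p → Finset (Fin n)}

lemma topSet_zero (n : ℕ) : topSet n 0 = ∅ := by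
  ext i
  have := i.isLt
  simp only [topSet, Finset.mem_filter, Finset.mem_univ, true_and, Finset.notMem_empty,
    iff_false]
  omega

lemma cumulBlocks_zero (n p : ℕ) (U : Fin p → Finset (Fin n)) : cumulBlocks n p U 0 = ∅ := by
  ext i
  rw [mem_cumulBlocks]
  simp

lemma mem_face_strongCond (hcover' : cumulBlocks n p U' p = Finset.univ)
    {σ : Equiv.Perm (Fin n)} (hmem : permVert n σ ∈ permFace n p U') :
    strongCond n p U' σ := by
  intro j hj
  rcases Nat.eq_zero_or_pos j with rfl | hj0
  · rw [cumulBlocks_zero]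
    simp [topSet_zero]
  rcases Nat.lt_or_ge j p with hjp | hjp
  · exact (vertex_sum_eq_iff n σ _).1 (hmem.2 j hj0 hjp)
  · have hj' : j = p := le_antisymm hj hjp
    subst hj'
    rw [hcover']
    have h1 : Finset.univ.image (⇑σ) = (Finset.univ : Finset (Fin n)) := by
      apply Finset.eq_univ_of_card
      rw [Finset.card_image_of_injective _ σ.injective, Finset.card_univ]
    rw [h1]
    have h2 : (Finset.univ : Finset (Fin n)).card = n := by simp
    rw [h2, topSet_univ]

lemma block_eq_sdiff (hdisj : ∀ l l', l ≠ l' → Disjoint (U l) (U l')) (l : Fin p) :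
    U l = cumulBlocks n p U ((l : ℕ) + 1) \ cumulBlocks n p U (l : ℕ) := by
  ext i
  rw [Finset.mem_sdiff, mem_cumulBlocks, mem_cumulBlocks]
  constructor
  · intro hi
    refine ⟨⟨l, by omega, hi⟩, ?_⟩
    rintro ⟨l', hl', hi'⟩
    have := blk_unique hdisj hi hi'
    subst this
    omega
  · rintro ⟨⟨l', hl', hi'⟩, hnot⟩
    have hll : (l' : ℕ) = (l : ℕ) := by
      by_contra h
      exact hnot ⟨l', by omega, hi'⟩
    rwa [show l' = l from Fin.ext hll] at hi'

set_option maxHeartbeats 1000000 in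
lemma mprime_mem (hn : 1 ≤ n) (hp : 1 ≤ p)
    (hne : ∀ l, (U l).Nonempty)
    (hdisj : ∀ l l', l ≠ l' → Disjoint (U l) (U l'))
    (hcover : cumulBlocks n p U p = Finset.univ)
    (hne' : ∀ l, (U' l).Nonempty)
    (hdisj' : ∀ l l', l ≠ l' → Disjoint (U' l) (U' l'))
    (hcover' : cumulBlocks n p U' p = Finset.univ)
    (hface : permFace n p U = permFace n p U')
    {j : ℕ} (h1 : 1 ≤ j) (h2 : j < p) :
    ∃ k, 1 ≤ k ∧ k < p ∧ (cumulBlocks n p U' j).card = (cumulBlocks n p U k).card := by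
  classical
  by_contra hcon
  push_neg at hcon
  obtain ⟨σ, hσ⟩ := exists_perm_blocks hn hdisj hcover
  have hσ' : strongCond n p U' σ := by
    apply mem_face_strongCond hcover'
    rw [← hface]
    exact strongCond_mem_face hσ
  set m := (cumulBlocks n p U' j).card with hmdef
  have hm1 : 1 ≤ m := le_trans h1 (le_card_cumul hne' hdisj' j (by omega))
  have hmn : m < n := by
    have h := cumul_lt_cumul hdisj' hne' h2 (le_refl p)
    rw [hcover'] at h
    simpa using h
  set S := (Finset.range p).filter (fun k => (cumulBlocks n p U k).card < m) with hSdef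
  have hS0 : 0 ∈ S := by
    simp only [hSdef, Finset.mem_filter, Finset.mem_range]
    exact ⟨by omega, by rw [cumulBlocks_zero]; simp; omega⟩
  set k0 := S.max' ⟨0, hS0⟩ with hk0def
  have hk0S := S.max'_mem ⟨0, hS0⟩
  rw [← hk0def] at hk0S
  simp only [hSdef, Finset.mem_filter, Finset.mem_range] at hk0S
  obtain ⟨hk0p, hk0lt⟩ := hk0S
  have hup : m < (cumulBlocks n p U (k0 + 1)).card := by
    by_cases hk0p1 : k0 + 1 = p
    · rw [hk0p1, hcover]
      simpa using hmn
    · have hk1p : k0 + 1 < p := by omega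
      have hnotin : k0 + 1 ∉ S := by
        intro hmem
        have := S.le_max' (k0 + 1) hmem
        omega
      simp only [hSdef, Finset.mem_filter, Finset.mem_range, not_and, not_lt] at hnotin
      have hle := hnotin hk1p
      have hneq := hcon (k0 + 1) (by omega) hk1p
      omega
  have hcle := card_cumul_le n p U (k0 + 1)
  set a1 : Fin n := ⟨n - m - 1, by omega⟩ with ha1def
  set a2 : Fin n := ⟨n - m, by omega⟩ with ha2def
  have hk0le : (cumulBlocks n p U k0).card ≤ n := card_cumul_le n p U k0
  -- find i1 ∈ U ⟨k0⟩ with σ i1 = a1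
  have ha1in : a1 ∈ topSet n (cumulBlocks n p U (k0 + 1)).card := by
    simp only [topSet, Finset.mem_filter, Finset.mem_univ, true_and, ha1def]
    omega
  rw [← hσ (k0 + 1) (by omega)] at ha1in
  rw [Finset.mem_image] at ha1in
  obtain ⟨i1, hi1mem, hσi1⟩ := ha1in
  have hi1not : i1 ∉ cumulBlocks n p U k0 := by
    intro h
    have : a1 ∈ topSet n (cumulBlocks n p U k0).card := by
      rw [← hσ k0 (by omega), Finset.mem_image]
      exact ⟨i1, h, hσi1⟩
    simp only [topSet, Finset.mem_filter, Finset.mem_univ, true_and, ha1def] at this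
    omega
  have hi1U : i1 ∈ U ⟨k0, by omega⟩ := by
    rw [mem_cumulBlocks] at hi1mem
    obtain ⟨l', hl', hi'⟩ := hi1mem
    have : (l' : ℕ) = k0 := by
      by_contra h
      exact hi1not (mem_cumulBlocks.2 ⟨l', by omega, hi'⟩)
    rwa [show l' = ⟨k0, by omega⟩ from Fin.ext this] at hi'
  -- find i2 ∈ U ⟨k0⟩ with σ i2 = a2
  have ha2in : a2 ∈ topSet n (cumulBlocks n p U (k0 + 1)).card := by
    simp only [topSet, Finset.mem_filter, Finset.mem_univ, true_and, ha2def]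
    omega
  rw [← hσ (k0 + 1) (by omega)] at ha2in
  rw [Finset.mem_image] at ha2in
  obtain ⟨i2, hi2mem, hσi2⟩ := ha2in
  have hi2not : i2 ∉ cumulBlocks n p U k0 := by
    intro h
    have : a2 ∈ topSet n (cumulBlocks n p U k0).card := by
      rw [← hσ k0 (by omega), Finset.mem_image]
      exact ⟨i2, h, hσi2⟩
    simp only [topSet, Finset.mem_filter, Finset.mem_univ, true_and, ha2def] at this
    omega
  have hi2U : i2 ∈ U ⟨k0, by omega⟩ := by
    rw [mem_cumulBlocks] at hi2mem
    obtain ⟨l', hl', hi'⟩ := hi2mem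
    have : (l' : ℕ) = k0 := by
      by_contra h
      exact hi2not (mem_cumulBlocks.2 ⟨l', by omega, hi'⟩)
    rwa [show l' = ⟨k0, by omega⟩ from Fin.ext this] at hi'
  -- i2 ∈ C'_j
  have hi2C' : i2 ∈ cumulBlocks n p U' j := by
    have ha2top : a2 ∈ topSet n m := by
      simp only [topSet, Finset.mem_filter, Finset.mem_univ, true_and, ha2def]
      omega
    rw [hmdef, ← hσ' j (by omega), Finset.mem_image] at ha2top
    obtain ⟨i, hiC', hσi⟩ := ha2top
    rwa [show i = i2 from σ.injective (hσi.trans hσi2.symm)] at hiC'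
  -- the swap
  have hσ2 : strongCond n p U ((Equiv.swap i1 i2).trans σ) :=
    strongCond_swap hdisj hσ hi1U hi2U
  have hσ2' : strongCond n p U' ((Equiv.swap i1 i2).trans σ) := by
    apply mem_face_strongCond hcover'
    rw [← hface]
    exact strongCond_mem_face hσ2
  have himg := hσ2' j (by omega)
  have hin : ((Equiv.swap i1 i2).trans σ) i2 ∈ topSet n m := by
    rw [hmdef, ← himg]
    exact Finset.mem_image_of_mem _ hi2C'
  have hσ2i2 : ((Equiv.swap i1 i2).trans σ) i2 = a1 := by
    simp only [Equiv.trans_apply, Equiv.swap_apply_right]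
    exact hσi1
  rw [hσ2i2] at hin
  simp only [topSet, Finset.mem_filter, Finset.mem_univ, true_and, ha1def] at hin
  omega

end Distinct

section Distinct2

variable {n p : ℕ} {U U' : Fin p → Finset (Fin n)}

lemma partition_unique (hn : 1 ≤ n) (hp : 1 ≤ p)
    (hne : ∀ l, (U l).Nonempty)
    (hdisj : ∀ l l', l ≠ l' → Disjoint (U l) (U l'))
    (hcover : cumulBlocks n p U p = Finset.univ)
    (hne' : ∀ l, (U' l).Nonempty)
    (hdisj' : ∀ l l', l ≠ l' → Disjoint (U' l) (U' l'))
    (hcover' : cumulBlocks n p U' p = Finset.univ)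
    (hface : permFace n p U = permFace n p U') : U = U' := by
  classical
  have hm_eq : ∀ j, 1 ≤ j → j < p →
      (cumulBlocks n p U j).card = (cumulBlocks n p U' j).card := by
    by_cases hp1 : p ≤ 1
    · intro j hj1 hj2; omega
    push_neg at hp1
    have hq : p - 1 + 1 = p := by omega
    set f : Fin (p - 1) → ℕ := fun k => (cumulBlocks n p U ((k : ℕ) + 1)).card with hfdef
    set g : Fin (p - 1) → ℕ := fun k => (cumulBlocks n p U' ((k : ℕ) + 1)).card with hgdef
    have hfmono : StrictMono f := by
      intro a b hab
      have hb := b.isLt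
      exact cumul_lt_cumul hdisj hne (by simp only [Fin.lt_def] at hab; omega) (by omega)
    have hgmono : StrictMono g := by
      intro a b hab
      have hb := b.isLt
      exact cumul_lt_cumul hdisj' hne' (by simp only [Fin.lt_def] at hab; omega) (by omega)
    set s : Finset ℕ := Finset.image f Finset.univ with hsdef
    have hcards : s.card = p - 1 := by
      rw [hsdef, Finset.card_image_of_injective _ hfmono.injective, Finset.card_univ,
        Fintype.card_fin]
    have hfs : ∀ k, f k ∈ s := fun k => Finset.mem_image_of_mem f (Finset.mem_univ k)
    have hgs : ∀ k, g k ∈ s := by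
      intro k
      have hk := k.isLt
      obtain ⟨k', hk1, hk2, he⟩ := mprime_mem hn hp hne hdisj hcover hne' hdisj' hcover'
        hface (show 1 ≤ (k : ℕ) + 1 by omega) (show (k : ℕ) + 1 < p by omega)
      have : g k = f ⟨k' - 1, by omega⟩ := by
        simp only [hgdef, hfdef]
        rw [show (k' - 1 : ℕ) + 1 = k' from by omega]
        exact he
      rw [this]
      exact hfs _
    have hf := Finset.orderEmbOfFin_unique hcards hfs hfmono
    have hg := Finset.orderEmbOfFin_unique hcards hgs hgmono
    intro j hj1 hj2
    have h1 : f ⟨j - 1, by omega⟩ = g ⟨j - 1, by omega⟩ := by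
      rw [hf, hg]
    simp only [hfdef, hgdef] at h1
    rwa [show (j - 1 : ℕ) + 1 = j from by omega] at h1
  obtain ⟨σ, hσ⟩ := exists_perm_blocks hn hdisj hcover
  have hσ' : strongCond n p U' σ := by
    apply mem_face_strongCond hcover'
    rw [← hface]
    exact strongCond_mem_face hσ
  have hC : ∀ j, j ≤ p → cumulBlocks n p U j = cumulBlocks n p U' j := by
    intro j hj
    rcases Nat.eq_zero_or_pos j with rfl | hj0
    · rw [cumulBlocks_zero, cumulBlocks_zero]
    rcases Nat.lt_or_ge j p with hjp | hjp
    · apply Finset.image_injective σ.injective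
      rw [hσ j hj, hσ' j hj, hm_eq j hj0 hjp]
    · have : j = p := le_antisymm hj hjp
      subst this
      rw [hcover, hcover']
  funext l
  have hl := l.isLt
  rw [block_eq_sdiff hdisj l, block_eq_sdiff hdisj' l, hC (l : ℕ) (by omega),
    hC ((l : ℕ) + 1) (by omega)]

end Distinct2


/-- Let `U_1|⋯|U_p` be an ordered partition of `{1,…,n}` into nonempty blocks.  Then
`F(U_1|⋯|U_p)` is a nonempty exposed face of `P_n`; it equals the convex hull of the
vertices `v_σ` for which `σ` maps `U_1 ∪ ⋯ ∪ U_j` onto the `m_j` largest values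
`{n−m_j+1,…,n}` for all `1 ≤ j < p` (i.e. `U_1` goes to the `#U_1` largest values, `U_2`
to the next `#U_2` values, and so on); its affine dimension equals `n − p`; and distinct
ordered partitions give distinct faces. -/
theorem permutahedron_partition_faces (n p : ℕ) (hn : 1 ≤ n) (hp : 1 ≤ p)
    (U : Fin p → Finset (Fin n)) (hne : ∀ l, (U l).Nonempty)
    (hdisj : ∀ l l', l ≠ l' → Disjoint (U l) (U l'))
    (hcover : cumulBlocks n p U p = Finset.univ) :
    IsExposed ℝ (permutahedron n) (permFace n p U) ∧
    (permFace n p U).Nonempty ∧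
    permFace n p U = convexHull ℝ {y | ∃ σ : Equiv.Perm (Fin n),
      (∀ j : ℕ, 1 ≤ j → j < p →
        (cumulBlocks n p U j).image (fun i => (σ i : ℕ) + 1) =
          Finset.Icc (n - (cumulBlocks n p U j).card + 1) n) ∧ y = permVert n σ} ∧
    Module.finrank ℝ (affineSpan ℝ (permFace n p U)).direction = n - p ∧
    (∀ U' : Fin p → Finset (Fin n), (∀ l, (U' l).Nonempty) →
      (∀ l l', l ≠ l' → Disjoint (U' l) (U' l')) →
      cumulBlocks n p U' p = Finset.univ →
      permFace n p U = permFace n p U' → U = U') := by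
  refine ⟨permFace_isExposed hn hdisj hcover,
    permFace_nonempty hn hdisj hcover,
    permFace_eq_hull hn hdisj hcover,
    finrank_direction hn hp hne hdisj hcover,
    fun U' hne' hdisj' hcover' hface =>
      partition_unique hn hp hne hdisj hcover hne' hdisj' hcover' hface⟩
end

section
/- The projections Δ_{r,s} act coassociatively: for all r, s, t ≥ 1 with r + s + t = n + 2, one has (Δ_{r,s} × id) ∘ Δ_{r+s−1, t} = (id × Δ_{s,t}) ∘ Δ_{r, s+t−1} as maps S_n → S_r × S_s × S_t. -/
/-- A word representing an element of `S_n`: a list that is a permutation of `(1,…,n)`. -/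
def IsWord (n : ℕ) (l : List ℕ) : Prop := l.Perm (List.range' 1 n)

/-- The canonical projection `Δ_{r,s} : S_n → S_r × S_s` (with `r + s = n + 1`), sending
a word `a` to (i) the subsequence of the entries of `a` lying in `{1,…,r}` and (ii) the
subsequence of the entries lying in `{r,…,n}`, with `r − 1` subtracted from each entry. -/
def deltaProj (r : ℕ) (l : List ℕ) : List ℕ × List ℕ :=
  (l.filter (fun x => decide (x ≤ r)),
   (l.filter (fun x => decide (r ≤ x))).map (fun x => x - (r - 1)))

/-- Coassociativity of the projections `Δ`: for `r, s, t ≥ 1` with `r + s + t = n + 2`,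
`(Δ_{r,s} × id) ∘ Δ_{r+s−1,t} = (id × Δ_{s,t}) ∘ Δ_{r,s+t−1}` as maps
`S_n → S_r × S_s × S_t` (equality of all three components). -/
theorem deltaProj_coassoc (n r s t : ℕ) (hr : 1 ≤ r) (hs : 1 ≤ s) (ht : 1 ≤ t)
    (h : r + s + t = n + 2) (a : List ℕ) (ha : IsWord n a) :
    (deltaProj r (deltaProj (r + s - 1) a).1).1 = (deltaProj r a).1 ∧
    (deltaProj r (deltaProj (r + s - 1) a).1).2 = (deltaProj s (deltaProj r a).2).1 ∧
    (deltaProj (r + s - 1) a).2 = (deltaProj s (deltaProj r a).2).2 := by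
  refine ⟨?_, ?_, ?_⟩
  · simp only [deltaProj, List.filter_filter]
    refine List.filter_congr fun x _ => ?_
    simp only [← Bool.decide_and, decide_eq_decide]
    omega
  · simp only [deltaProj, List.filter_map, List.filter_filter, Function.comp_def]
    congr 1
    refine List.filter_congr fun x _ => ?_
    simp only [← Bool.decide_and, decide_eq_decide]
    omega
  · simp only [deltaProj, List.filter_map, List.filter_filter, List.map_map,
      Function.comp_def]
    rw [show (fun x => x - (r - 1) - (s - 1)) = (fun x => x - (r + s - 1 - 1)) from
      funext fun x => by omega]
    congr 1
    refine List.filter_congr fun x _ => ?_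
    simp only [← Bool.decide_and, decide_eq_decide]
    omega
end

section
/- For every n ≥ 2: (i) ρ_n ∘ γ_n is the identity of (S_2)^{n−1}; (ii) γ_n is injective; (iii) a permutation σ ∈ S_n satisfies γ_n(ρ_n(σ)) = σ if and only if σ lies in the image of γ_n, i.e., the vertices of P_n fixed by γ_n ρ_n are exactly its cubical vertices; (iv) P_n has exactly 2^{n−1} cubical vertices. -/
/-- `ρ_n : S_n → (S_2)^{n−1}`, where `S_2` is identified with `Bool` (`false` = identity,
`true` = transposition): the `i`-th component (`1 ≤ i ≤ n−1`) is the identity iff `i`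
occurs before `i+1` in the word. -/
def rhoWord (n : ℕ) (l : List ℕ) : List Bool :=
  (List.range' 1 (n - 1)).map (fun i => decide (l.idxOf (i + 1) < l.idxOf i))

/-- Auxiliary recursion for `γ`: append `k` at the end if the next letter is the
identity (`false`), prepend `k` at the front otherwise. -/
def gammaAux : ℕ → List Bool → List ℕ → List ℕ
  | _, [], acc => acc
  | k, b :: rest, acc => gammaAux (k + 1) rest (if b then k :: acc else acc ++ [k])

/-- `γ_n : (S_2)^{n−1} → S_n`: start with `A_2 = (1,2)` or `(2,1)` according to the first
component, then successively append `k` at the end or prepend it at the front. -/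
def gammaWord : List Bool → List ℕ
  | [] => [1]
  | b :: rest => gammaAux 3 rest (if b then [2, 1] else [1, 2])

lemma gamma_key (rest : List Bool) : ∀ (m : ℕ) (acc : List ℕ),
    acc.Perm (List.range' 1 (m + 1)) →
    rhoWord (m + 1 + rest.length) (gammaAux (m + 2) rest acc) =
      rhoWord (m + 1) acc ++ rest := by
  induction rest with
  | nil => intro m acc _; simp [gammaAux]
  | cons b rest ih =>
    intro m acc h
    have hmem : ∀ a, a ∈ acc ↔ 1 ≤ a ∧ a < m + 2 := by
      intro a; rw [h.mem_iff, List.mem_range'_1]; omega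
    set acc' : List ℕ := if b then (m + 2) :: acc else acc ++ [m + 2] with hacc'
    have hperm' : acc'.Perm (List.range' 1 (m + 1 + 1)) := by
      rw [List.range'_1_concat]
      have h2 : (acc ++ [m + 2]).Perm (List.range' 1 (m + 1) ++ [1 + (m+1)]) := by
        have := h.append_right [m + 2]
        simpa [show 1 + (m + 1) = m + 2 by omega] using this
      cases b with
      | false => simpa [hacc'] using h2
      | true => exact (List.perm_append_singleton _ _).symm.trans h2
    have step : gammaAux (m + 2) (b :: rest) acc = gammaAux (m + 1 + 2) rest acc' := by
      simp [gammaAux, hacc']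
    have len : m + 1 + (b :: rest).length = m + 1 + 1 + rest.length := by
      simp; omega
    rw [step, len, ih (m + 1) acc' hperm']
    -- now need rhoWord (m+2) acc' = rhoWord (m+1) acc ++ [b]
    have hidx : ∀ a, a ∈ acc → acc'.idxOf a =
        (if b then acc.idxOf a + 1 else acc.idxOf a) := by
      intro a ha
      have hne : m + 2 ≠ a := by have := (hmem a).1 ha; omega
      cases b with
      | false => simp [hacc', List.idxOf_append_of_mem ha]
      | true => simp [hacc', List.idxOf_cons_ne _ hne]
    have key : rhoWord (m + 1 + 1) acc' = rhoWord (m + 1) acc ++ [b] := by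
      unfold rhoWord
      rw [show m + 1 + 1 - 1 = m + 1 from rfl, show m + 1 - 1 = m from rfl,
        List.range'_1_concat, List.map_append]
      congr 1
      · apply List.map_congr_left
        intro i hi
        rw [List.mem_range'_1] at hi
        have h1 : i ∈ acc := (hmem i).2 ⟨hi.1, by omega⟩
        have h2 : i + 1 ∈ acc := (hmem (i+1)).2 ⟨by omega, by omega⟩
        rw [hidx i h1, hidx (i+1) h2]
        cases b <;> simp
      · have hm1 : (1 + m) ∈ acc := (hmem _).2 ⟨by omega, by omega⟩
        have hnm : (m + 2) ∉ acc := by rw [hmem]; omega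
        cases b with
        | true =>
          simp only [List.map_cons, List.map_nil]
          have e1 : acc'.idxOf (1 + m + 1) = 0 := by
            simp [hacc', show 1 + m + 1 = m + 2 by omega, List.idxOf_cons_self]
          have e2 : acc'.idxOf (1 + m) = acc.idxOf (1 + m) + 1 := by
            simpa using hidx (1 + m) hm1
          simp [e1, e2]
        | false =>
          simp only [List.map_cons, List.map_nil]
          have e1 : acc'.idxOf (1 + m + 1) = acc.length := by
            simp [hacc', show 1 + m + 1 = m + 2 by omega,
              List.idxOf_append_of_notMem hnm]
          have e2 : acc'.idxOf (1 + m) = acc.idxOf (1 + m) := by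
            simpa using hidx (1 + m) hm1
          have e3 : acc.idxOf (1 + m) < acc.length := List.idxOf_lt_length_iff.2 hm1
          simp [e1, e2]; omega
    rw [key, List.append_assoc]; rfl

lemma listBool_ncard (m : ℕ) : {w : List Bool | w.length = m}.ncard = 2 ^ m := by
  rw [← Nat.card_coe_set_eq]
  have e : {w : List Bool | w.length = m} ≃ List.Vector Bool m :=
    ⟨fun x => ⟨x.1, x.2⟩, fun v => ⟨v.1, v.2⟩, fun _ => rfl, fun _ => rfl⟩
  rw [Nat.card_congr e, Nat.card_eq_fintype_card, card_vector]
  simp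

/-- For every `n ≥ 2`: (i) `ρ_n ∘ γ_n = id` on `(S_2)^{n−1}`; (ii) `γ_n` is injective;
(iii) a permutation `σ ∈ S_n` satisfies `γ_n(ρ_n(σ)) = σ` iff `σ` lies in the image of
`γ_n` (the vertices of `P_n` fixed by `γ_n ρ_n` are exactly its cubical vertices);
(iv) `P_n` has exactly `2^{n−1}` cubical vertices. -/
theorem gamma_rho_cubical (n : ℕ) (hn : 2 ≤ n) :
    (∀ w : List Bool, w.length = n - 1 → rhoWord n (gammaWord w) = w) ∧
    (∀ w w' : List Bool, w.length = n - 1 → w'.length = n - 1 →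
      gammaWord w = gammaWord w' → w = w') ∧
    (∀ l : List ℕ, IsWord n l →
      (gammaWord (rhoWord n l) = l ↔ ∃ w : List Bool, w.length = n - 1 ∧ gammaWord w = l)) ∧
    {l : List ℕ | ∃ w : List Bool, w.length = n - 1 ∧ gammaWord w = l}.ncard = 2 ^ (n - 1) := by
  have part1 : ∀ w : List Bool, w.length = n - 1 → rhoWord n (gammaWord w) = w := by
    intro w hw
    match w with
    | [] => simp at hw; omega
    | b :: rest =>
      have hperm : (if b then [2, 1] else [1, 2] : List ℕ).Perm (List.range' 1 (1 + 1)) := by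
        cases b <;> simp [List.range'] <;> exact List.Perm.swap 1 2 []
      have := gamma_key rest 1 _ hperm
      have hlen : 1 + 1 + rest.length = n := by
        simp at hw; omega
      rw [hlen] at this
      rw [show gammaWord (b :: rest) = gammaAux 3 rest (if b then [2,1] else [1,2]) from rfl]
      rw [show (3 : ℕ) = 1 + 2 from rfl, this]
      have : rhoWord (1 + 1) (if b then [2, 1] else [1, 2] : List ℕ) = [b] := by
        cases b <;> simp [rhoWord, List.range']
      rw [this]; rfl
  have part2 : ∀ w w' : List Bool, w.length = n - 1 → w'.length = n - 1 →
      gammaWord w = gammaWord w' → w = w' := by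
    intro w w' hw hw' heq
    rw [← part1 w hw, ← part1 w' hw', heq]
  refine ⟨part1, part2, ?_, ?_⟩
  · intro l _
    constructor
    · intro hfix
      exact ⟨rhoWord n l, by simp [rhoWord], hfix⟩
    · rintro ⟨w, hw, rfl⟩
      rw [part1 w hw]
  · have himg : {l : List ℕ | ∃ w : List Bool, w.length = n - 1 ∧ gammaWord w = l}
        = gammaWord '' {w : List Bool | w.length = n - 1} := by
      ext l; simp [Set.mem_image]
    rw [himg]
    exact (Set.ncard_image_of_injOn (fun w hw w' hw' => part2 w w' hw hw')).trans
      (listBool_ncard _)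
end

section
/- For every n ≥ 2 and every ordered partition A|B of {1,…,n+1} into two nonempty blocks, one has A⊔̲B = A⊔̄B = {1, 2, …, n}. -/
/-- The indexing map `I_M : M → {1,…,#M}` of an increasingly ordered set `M ⊂ ℕ`:
`idxMap M x` is the rank of `x` in `M` (the number of elements of `M` that are `≤ x`). -/
def idxMap (M : Finset ℕ) (x : ℕ) : ℕ := (M.filter (fun y => y ≤ x)).card

/-- The lower disjoint union `A⊔̲B` (with respect to `U`) of nonempty disjoint subsets
`A, B` with `A ∪ B ⊆ U`: `I_{U∖A}(B) + #A − 1` if `min B > min(U∖A)`, and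
`(I_{U∖A}(B) + #A − 1) ∪ {1,…,#A}` if `min B = min(U∖A)`. -/
def lowerDU (U A B : Finset ℕ) : Finset ℕ :=
  let base := (B.image (idxMap (U \ A))).image (fun x => x + (A.card - 1))
  if (U \ A).min < B.min then base else base ∪ Finset.Icc 1 A.card

/-- The upper disjoint union `A⊔̄B` (with respect to `U`): `I_{U∖B}(A)` if
`max A < max(U∖B)`, and `I_{U∖B}(A) ∪ ({#U−#B+1,…,#U} − 1)` if `max A = max(U∖B)`. -/
def upperDU (U A B : Finset ℕ) : Finset ℕ :=
  let base := A.image (idxMap (U \ B))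
  if A.max < (U \ B).max then base
  else base ∪ Finset.Icc (U.card - B.card) (U.card - 1)


lemma idxMap_strictMonoOn (M : Finset ℕ) : StrictMonoOn (idxMap M) ↑M := by
  intro x hx y hy hxy
  apply Finset.card_lt_card
  constructor
  · intro z hz
    exact Finset.mem_filter.mpr
      ⟨(Finset.mem_filter.mp hz).1, le_trans (Finset.mem_filter.mp hz).2 hxy.le⟩
  · intro h
    have := h (Finset.mem_filter.mpr ⟨hy, le_refl y⟩)
    have := (Finset.mem_filter.mp this).2
    omega

lemma image_idxMap (M : Finset ℕ) : M.image (idxMap M) = Finset.Icc 1 M.card := by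
  apply Finset.eq_of_subset_of_card_le
  · intro k hk
    obtain ⟨x, hx, rfl⟩ := Finset.mem_image.mp hk
    refine Finset.mem_Icc.mpr ⟨?_, Finset.card_filter_le _ _⟩
    have : x ∈ M.filter (fun y => y ≤ x) := Finset.mem_filter.mpr ⟨hx, le_refl x⟩
    exact Finset.card_pos.mpr ⟨x, this⟩
  · rw [Nat.card_Icc, Finset.card_image_of_injOn ((idxMap_strictMonoOn M).injOn)]
    omega

/-- For every `n ≥ 2` and every ordered partition `A|B` of `{1,…,n+1}` into two nonempty
blocks, one has `A⊔̲B = A⊔̄B = {1,…,n}`. -/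
theorem lowerDU_upperDU_of_partition (n : ℕ) (hn : 2 ≤ n) (A B : Finset ℕ)
    (hA : A.Nonempty) (hB : B.Nonempty) (hd : Disjoint A B)
    (hu : A ∪ B = Finset.Icc 1 (n + 1)) :
    lowerDU (Finset.Icc 1 (n + 1)) A B = Finset.Icc 1 n ∧
    upperDU (Finset.Icc 1 (n + 1)) A B = Finset.Icc 1 n := by
  have hUA : Finset.Icc 1 (n+1) \ A = B := by
    rw [← hu, Finset.union_sdiff_cancel_left hd]
  have hUB : Finset.Icc 1 (n+1) \ B = A := by
    rw [← hu, Finset.union_sdiff_cancel_right hd]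
  have hcard : A.card + B.card = n + 1 := by
    rw [← Finset.card_union_of_disjoint hd, hu, Nat.card_Icc]; omega
  have hAc : 1 ≤ A.card := Finset.card_pos.mpr hA
  have hBc : 1 ≤ B.card := Finset.card_pos.mpr hB
  have hAn : A.card ≤ n := by omega
  constructor
  · rw [lowerDU, hUA]
    simp only [if_neg (lt_irrefl B.min), image_idxMap]
    have h1 : (Finset.Icc 1 B.card).image (fun x => x + (A.card - 1))
        = Finset.Icc A.card n := by
      rw [Finset.image_add_right_Icc]
      congr 1 <;> omega
    rw [h1]
    ext k
    simp only [Finset.mem_union, Finset.mem_Icc]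
    omega
  · rw [upperDU, hUB]
    simp only [if_neg (lt_irrefl A.max), image_idxMap, Nat.card_Icc]
    have h1 : Finset.Icc (n + 1 + 1 - 1 - B.card) (n + 1 + 1 - 1 - 1)
        = Finset.Icc A.card n := by congr 1 <;> omega
    rw [h1]
    ext k
    simp only [Finset.mem_union, Finset.mem_Icc]
    omega
end
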